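/- Let α, σ, β, E(K) > 0 and define κ̂(a) = e^{-(α+σ)a}, R₀ = βE(K)/(α+σ). Then ∫₀^∞ β E(K) κ̂(a) [1 + (pσE(K)/(α+σ-β))(e^{-βa} - κ̂(a)) - (pσE(K)/(α+σ))(1 - κ̂(a)) - (pσ/(α+σ))(1 - κ̂(a))] da = R₀ (1 - pσβE(K)/(2(α+σ)(α+σ+β)) - pσ/(2(α+σ))), assuming β ≠ α+σ. -/

import Mathlib

open Real MeasureTheory Set

lemma integral_exp_neg_mul_Ioi_zero {c : ℝ} (hc : 0 < c) :
    (∫ a in Ioi (0:ℝ), Real.exp (-c * a)) = 1 / c := by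
  have hd : ∀ x : ℝ, HasDerivAt (fun a : ℝ => -Real.exp (-c * a) / c)
      (Real.exp (-c * x)) x := by
    intro x
    have h1 : HasDerivAt (fun a : ℝ => -c * a) (-c) x := by
      simpa using (hasDerivAt_id x).const_mul (-c)
    have h2 := (((Real.hasDerivAt_exp (-c * x)).comp x h1).neg).div_const c
    exact h2.congr_deriv (by rw [div_eq_iff hc.ne']; ring)
  have hm : Filter.Tendsto (fun a : ℝ => -Real.exp (-c * a) / c)
      Filter.atTop (nhds 0) := by
    have hb : Filter.Tendsto (fun a : ℝ => -c * a) Filter.atTop Filter.atBot :=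
      Filter.Tendsto.const_mul_atTop_of_neg (neg_neg_iff_pos.mpr hc) Filter.tendsto_id
    have he : Filter.Tendsto (fun a : ℝ => Real.exp (-c * a)) Filter.atTop (nhds 0) :=
      Real.tendsto_exp_atBot.comp hb
    have := (he.div_const c).neg
    simpa [neg_div] using this
  have h := MeasureTheory.integral_Ioi_of_hasDerivAt_of_tendsto
    (hd 0).continuousAt.continuousWithinAt (fun x _ => hd x)
    (exp_neg_integrableOn_Ioi 0 hc) hm
  rw [h]
  simp only [mul_zero, neg_zero, Real.exp_zero]
  ring

theorem reproduction_number_ct (α σ β EK p : ℝ)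
    (hα : 0 < α) (hσ : 0 < σ) (hβ : 0 < β) (hEK : 0 < EK) (hne : β ≠ α + σ) :
    (∫ a in Ioi (0:ℝ),
        β * EK * Real.exp (-(α + σ) * a) *
          (1 + p * σ * EK / (α + σ - β) *
                (Real.exp (-β * a) - Real.exp (-(α + σ) * a))
             - p * σ * EK / (α + σ) * (1 - Real.exp (-(α + σ) * a))
             - p * σ / (α + σ) * (1 - Real.exp (-(α + σ) * a)))) =
      β * EK / (α + σ) *
        (1 - p * σ * β * EK / (2 * (α + σ) * (α + σ + β)) - p * σ / (2 * (α + σ))) := by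
  set s := α + σ with hs
  have hs0 : 0 < s := by positivity
  have hsb : 0 < s + β := by positivity
  have h2s : 0 < 2 * s := by positivity
  have hsne : s ≠ 0 := hs0.ne'
  have hsmb : s - β ≠ 0 := sub_ne_zero.mpr (fun h => hne h.symm)
  set A := β * EK * (1 - p * σ * EK / s - p * σ / s) with hA
  set B := β * EK * (p * σ * EK / (s - β)) with hB
  set C := β * EK * (p * σ * EK / s + p * σ / s - p * σ * EK / (s - β)) with hC
  have hfun : ∀ a : ℝ,
      β * EK * Real.exp (-s * a) *
          (1 + p * σ * EK / (s - β) * (Real.exp (-β * a) - Real.exp (-s * a))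
             - p * σ * EK / s * (1 - Real.exp (-s * a))
             - p * σ / s * (1 - Real.exp (-s * a)))
        = A * Real.exp (-s * a) + B * Real.exp (-(s + β) * a)
            + C * Real.exp (-(2 * s) * a) := by
    intro a
    have e1 : Real.exp (-(s + β) * a) = Real.exp (-s * a) * Real.exp (-β * a) := by
      rw [← Real.exp_add]; ring_nf
    have e2 : Real.exp (-(2 * s) * a) = Real.exp (-s * a) * Real.exp (-s * a) := by
      rw [← Real.exp_add]; ring_nf
    rw [e1, e2, hA, hB, hC]
    field_simp
    ring
  have hint1 : IntegrableOn (fun a : ℝ => Real.exp (-s * a)) (Ioi 0) :=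
    exp_neg_integrableOn_Ioi 0 hs0
  have hint2 : IntegrableOn (fun a : ℝ => Real.exp (-(s + β) * a)) (Ioi 0) :=
    exp_neg_integrableOn_Ioi 0 hsb
  have hint3 : IntegrableOn (fun a : ℝ => Real.exp (-(2 * s) * a)) (Ioi 0) :=
    exp_neg_integrableOn_Ioi 0 h2s
  calc
    (∫ a in Ioi (0:ℝ),
        β * EK * Real.exp (-s * a) *
          (1 + p * σ * EK / (s - β) * (Real.exp (-β * a) - Real.exp (-s * a))
             - p * σ * EK / s * (1 - Real.exp (-s * a))
             - p * σ / s * (1 - Real.exp (-s * a))))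
      = ∫ a in Ioi (0:ℝ),
          (A * Real.exp (-s * a) + B * Real.exp (-(s + β) * a)
            + C * Real.exp (-(2 * s) * a)) := by
        exact integral_congr_ae (Filter.Eventually.of_forall (fun a => hfun a))
    _ = A * (1 / s) + B * (1 / (s + β)) + C * (1 / (2 * s)) := by
        have hfg : Integrable
            (fun a : ℝ => A * Real.exp (-s * a) + B * Real.exp (-(s + β) * a))
            (volume.restrict (Ioi (0:ℝ))) :=
          (hint1.const_mul A).add (hint2.const_mul B)
        have hfA : Integrable (fun a : ℝ => A * Real.exp (-s * a))
            (volume.restrict (Ioi (0:ℝ))) := hint1.const_mul A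
        have hfB : Integrable (fun a : ℝ => B * Real.exp (-(s + β) * a))
            (volume.restrict (Ioi (0:ℝ))) := hint2.const_mul B
        have hfC : Integrable (fun a : ℝ => C * Real.exp (-(2 * s) * a))
            (volume.restrict (Ioi (0:ℝ))) := hint3.const_mul C
        rw [integral_add hfg hfC, integral_add hfA hfB,
          MeasureTheory.integral_const_mul, MeasureTheory.integral_const_mul, MeasureTheory.integral_const_mul,
          integral_exp_neg_mul_Ioi_zero hs0, integral_exp_neg_mul_Ioi_zero hsb,
          integral_exp_neg_mul_Ioi_zero h2s]
    _ = β * EK / s * (1 - p * σ * β * EK / (2 * s * (s + β)) - p * σ / (2 * s)) := by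
        rw [hA, hB, hC]
        field_simp
        ring
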